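/- Let 0 < ε < 1. For Lebesgue-almost every irrational x ∈ (0,1), there exists a strictly increasing sequence of natural numbers n₁ < n₂ < n₃ < ⋯ (depending on x and ε) such that for all k, 2e^{−2F}/(1+ε) < q_{n_k+1}(x)/q_{n_k}(x) < 2e^{2F}/(1−ε), where q_n(x) are the denominators of the continued fraction convergents of x and F is the reciprocal Fibonacci constant. -/

import Mathlib

open Filter Topology Set MeasureTheory Real
open scoped NNReal ENNReal

/-- The reciprocal Fibonacci constant `F = ∑_{n ≥ 1} 1/fib(n)`. -/
noncomputable def recipFibConst : ℝ := ∑' n : ℕ, 1 / (Nat.fib (n + 1) : ℝ)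

noncomputable def gaussT (y : ℝ) : ℝ := Int.fract y⁻¹

lemma lip_on (A : ℝ≥0) (hA : 1 ≤ A) {T : Set ℝ} (hT : ∀ t ∈ T, (0:ℝ) ≤ t) :
    LipschitzOnWith ((A * A)⁻¹) (fun t : ℝ => ((A:ℝ) + t)⁻¹) T := by
  rw [lipschitzOnWith_iff_dist_le_mul]
  intro s hs t ht
  have hA0 : (0:ℝ) < A := lt_of_lt_of_le one_pos hA
  have hs0 := hT s hs
  have ht0 := hT t ht
  have h1 : (0:ℝ) < (A:ℝ) + s := by linarith
  have h2 : (0:ℝ) < (A:ℝ) + t := by linarith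
  rw [Real.dist_eq, Real.dist_eq]
  have key : ((A:ℝ) + s)⁻¹ - ((A:ℝ) + t)⁻¹ = (t - s) / (((A:ℝ) + s) * ((A:ℝ) + t)) := by
    field_simp
    ring
  rw [key, abs_div, abs_of_pos (mul_pos h1 h2), abs_sub_comm t s, NNReal.coe_inv,
    NNReal.coe_mul, div_le_iff₀ (mul_pos h1 h2)]
  have h3 : (A:ℝ) * A ≤ ((A:ℝ) + s) * ((A:ℝ) + t) := by nlinarith
  calc |s - t| = ((A:ℝ)*A)⁻¹ * |s-t| * ((A:ℝ)*A) := by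
        field_simp
    _ ≤ ((A:ℝ)*A)⁻¹ * |s-t| * (((A:ℝ)+s)*((A:ℝ)+t)) := by
        gcongr

lemma vol_image_le (A : ℝ≥0) (hA : 1 ≤ A) {T : Set ℝ} (hT : ∀ t ∈ T, (0:ℝ) ≤ t) :
    volume ((fun t : ℝ => ((A:ℝ) + t)⁻¹) '' T) ≤ ((A * A)⁻¹ : ℝ≥0) * volume T := by
  have h := (lip_on A hA hT).hausdorffMeasure_image_le (d := 1) zero_le_one
  rw [MeasureTheory.hausdorffMeasure_real] at h
  simpa using h

lemma Irrational.ne_zero' {x : ℝ} (h : Irrational x) : x ≠ 0 := by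
  rintro rfl; exact h ⟨0, by norm_num⟩

lemma step_cover {S T : Set ℝ} {c : ℕ} (hc : 0 < c)
    (hS : ∀ x ∈ S, Irrational x ∧ x ∈ Ioo (0:ℝ) 1 ∧ x < (c:ℝ)⁻¹ ∧ gaussT x ∈ T)
    (hT : ∀ t ∈ T, (0:ℝ) ≤ t) :
    volume S ≤ ∑' (a : ℕ), (((((a:ℝ≥0) + c) * ((a:ℝ≥0) + c))⁻¹ : ℝ≥0) : ℝ≥0∞) * volume T := by
  have hsub : S ⊆ ⋃ (a : ℕ), (fun t : ℝ => ((a:ℝ) + (c:ℝ) + t)⁻¹) '' T := by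
    intro x hx
    obtain ⟨hirr, hIoo, hlt, hTx⟩ := hS x hx
    have hx0 : (0:ℝ) < x := hIoo.1
    have hxinv : (c : ℝ) < x⁻¹ := by
      rw [← inv_inv (c:ℝ)]
      exact inv_strictAnti₀ hx0 hlt
    set b : ℤ := ⌊x⁻¹⌋ with hb
    have hcb : (c : ℤ) ≤ b := Int.le_floor.mpr (by exact_mod_cast hxinv.le)
    refine mem_iUnion.mpr ⟨(b - c).toNat, ?_⟩
    refine ⟨gaussT x, hTx, ?_⟩
    have hfr : gaussT x = x⁻¹ - b := by rw [gaussT, Int.fract]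
    have h0 : ((b - c).toNat : ℤ) = b - c := Int.toNat_of_nonneg (by omega)
    have hcast : (((b - c).toNat : ℝ)) = (b:ℝ) - c := by
      calc (((b - c).toNat : ℝ)) = (((b - c).toNat : ℤ) : ℝ) := by push_cast; ring
        _ = ((b - (c:ℤ) : ℤ) : ℝ) := by rw [h0]
        _ = (b:ℝ) - c := by push_cast; ring
    show (((b - c).toNat : ℝ) + (c:ℝ) + gaussT x)⁻¹ = x
    rw [hcast, hfr]
    have : (b:ℝ) - c + c + (x⁻¹ - b) = x⁻¹ := by ring
    rw [this, inv_inv]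
  calc volume S ≤ volume (⋃ (a : ℕ), (fun t : ℝ => ((a:ℝ) + (c:ℝ) + t)⁻¹) '' T) :=
        measure_mono hsub
    _ ≤ ∑' (a : ℕ), volume ((fun t : ℝ => ((a:ℝ) + (c:ℝ) + t)⁻¹) '' T) :=
        measure_iUnion_le _
    _ ≤ ∑' (a : ℕ), (((((a:ℝ≥0) + c) * ((a:ℝ≥0) + c))⁻¹ : ℝ≥0) : ℝ≥0∞) * volume T := by
        refine ENNReal.tsum_le_tsum fun a => ?_
        have h1 : (1:ℝ≥0) ≤ ((a:ℝ≥0) + c) := by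
          have : (1:ℕ) ≤ c := hc
          exact le_add_of_nonneg_of_le zero_le (by exact_mod_cast this)
        have := vol_image_le ((a:ℝ≥0) + c) h1 hT
        have hco : (((((a:ℝ≥0) + c) : ℝ≥0) : ℝ)) = (a:ℝ) + (c:ℝ) := by push_cast; ring
        rwa [hco] at this

lemma tsum_cover_bound :
    ∑' (a : ℕ), (((((a:ℝ≥0) + 3) * ((a:ℝ≥0) + 3))⁻¹ : ℝ≥0) : ℝ≥0∞) ≤ 2⁻¹ := by
  set r : ℕ → ℝ := fun a => (((a:ℝ) + 3) * ((a:ℝ) + 3))⁻¹ with hr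
  set f : ℕ → ℝ := fun i => ((i:ℝ) + 2)⁻¹ with hf
  have hrnn : ∀ a, 0 ≤ r a := fun a => by positivity
  have hstep : ∀ i : ℕ, r i ≤ f i - f (i + 1) := by
    intro i
    have h2 : f i - f (i+1) = (((i:ℝ)+2) * ((i:ℝ)+3))⁻¹ := by
      simp only [hf]
      push_cast
      have e1 : ((i:ℝ)+2) ≠ 0 := by positivity
      have e2 : ((i:ℝ)+3) ≠ 0 := by positivity
      field_simp
      ring
    rw [h2, hr]
    have hle : ((i:ℝ)+2) * ((i:ℝ)+3) ≤ ((i:ℝ)+3) * ((i:ℝ)+3) := by nlinarith [Nat.cast_nonneg (α := ℝ) i]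
    exact inv_anti₀ (by positivity) hle
  have hpart : ∀ n, ∑ i ∈ Finset.range n, r i ≤ 1/2 := by
    intro n
    calc ∑ i ∈ Finset.range n, r i ≤ ∑ i ∈ Finset.range n, (f i - f (i+1)) :=
          Finset.sum_le_sum fun i _ => hstep i
      _ = f 0 - f n := Finset.sum_range_sub' f n
      _ ≤ f 0 := by
          have : 0 ≤ f n := by positivity
          linarith
      _ = 1/2 := by norm_num [hf]
  have hsum : Summable r := summable_of_sum_range_le hrnn hpart
  have htsum : ∑' a, r a ≤ 1/2 := hsum.tsum_le_of_sum_range_le hpart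
  have hco : ∀ a : ℕ, (((((a:ℝ≥0) + 3) * ((a:ℝ≥0) + 3))⁻¹ : ℝ≥0) : ℝ≥0∞)
      = ENNReal.ofReal (r a) := by
    intro a
    rw [← ENNReal.ofReal_coe_nnreal]
    congr 1

  calc ∑' (a : ℕ), (((((a:ℝ≥0) + 3) * ((a:ℝ≥0) + 3))⁻¹ : ℝ≥0) : ℝ≥0∞)
      = ∑' (a : ℕ), ENNReal.ofReal (r a) := by simp only [hco]
    _ = ENNReal.ofReal (∑' a, r a) := (ENNReal.ofReal_tsum_of_nonneg hrnn hsum).symm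
    _ ≤ ENNReal.ofReal (1/2) := ENNReal.ofReal_le_ofReal htsum
    _ = 2⁻¹ := by
        rw [show (1/2 : ℝ) = (2:ℝ)⁻¹ by norm_num, ENNReal.ofReal_inv_of_pos (by norm_num)]
        norm_num

lemma gaussT_irrational {y : ℝ} (h : Irrational y) : Irrational (gaussT y) := by
  have h2 : Irrational y⁻¹ := irrational_inv_iff.mpr h
  have := h2.sub_intCast ⌊y⁻¹⌋
  rwa [gaussT, Int.fract]

lemma gaussT_mem {y : ℝ} (h : Irrational y) : gaussT y ∈ Ioo (0:ℝ) 1 :=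
  ⟨((Int.fract_nonneg y⁻¹).lt_of_ne' (gaussT_irrational h).ne_zero'), Int.fract_lt_one _⟩

def Wset (k : ℕ) : Set ℝ :=
  {x | Irrational x ∧ x ∈ Ioo (0:ℝ) 1 ∧ ∀ i < k, gaussT^[i] x < 3⁻¹}

def BadN (N : ℕ) : Set ℝ :=
  {x | Irrational x ∧ x ∈ Ioo (0:ℝ) 1 ∧ ∀ n, N ≤ n → gaussT^[n] x < 3⁻¹}

lemma Wset_vol : ∀ k, volume (Wset k) ≤ 2⁻¹ ^ k := by
  intro k
  induction k with
  | zero =>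
      calc volume (Wset 0) ≤ volume (Ioo (0:ℝ) 1) :=
            measure_mono fun x hx => hx.2.1
        _ = 1 := by simp
        _ = 2⁻¹ ^ 0 := by norm_num
  | succ k ih =>
      have hstep := step_cover (S := Wset (k+1)) (T := Wset k) (c := 3) (by norm_num)
        (fun x hx => ⟨hx.1, hx.2.1, by
          have := hx.2.2 0 (Nat.succ_pos k)
          simpa using this, ⟨gaussT_irrational hx.1, gaussT_mem hx.1, fun i hi => by
            rw [← Function.iterate_succ_apply]
            exact hx.2.2 (i+1) (Nat.succ_lt_succ hi)⟩⟩)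
        (fun t ht => ht.2.1.1.le)
      calc volume (Wset (k+1))
          ≤ ∑' (a : ℕ), (((((a:ℝ≥0) + 3) * ((a:ℝ≥0) + 3))⁻¹ : ℝ≥0) : ℝ≥0∞) * volume (Wset k) := by
            exact_mod_cast hstep
        _ = (∑' (a : ℕ), (((((a:ℝ≥0) + 3) * ((a:ℝ≥0) + 3))⁻¹ : ℝ≥0) : ℝ≥0∞)) * volume (Wset k) :=
            ENNReal.tsum_mul_right
        _ ≤ 2⁻¹ * 2⁻¹ ^ k := by
            exact mul_le_mul' tsum_cover_bound ih
        _ = 2⁻¹ ^ (k+1) := by ring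

lemma BadN_null : ∀ N, volume (BadN N) = 0 := by
  intro N
  induction N with
  | zero =>
      have hsub : ∀ k, BadN 0 ⊆ Wset k := by
        intro k x hx
        exact ⟨hx.1, hx.2.1, fun i _ => hx.2.2 i (Nat.zero_le i)⟩
      have hle : ∀ k : ℕ, volume (BadN 0) ≤ 2⁻¹ ^ k :=
        fun k => le_trans (measure_mono (hsub k)) (Wset_vol k)
      have htend : Tendsto (fun k : ℕ => (2⁻¹ : ℝ≥0∞) ^ k) atTop (𝓝 0) :=
        ENNReal.tendsto_pow_atTop_nhds_zero_of_lt_one (by norm_num)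
      exact le_antisymm (ge_of_tendsto' htend hle) zero_le
  | succ N ih =>
      have hstep := step_cover (S := BadN (N+1)) (T := BadN N) (c := 1) (by norm_num)
        (fun x hx => ⟨hx.1, hx.2.1, by simpa using hx.2.1.2,
          ⟨gaussT_irrational hx.1, gaussT_mem hx.1, fun n hn => by
            rw [← Function.iterate_succ_apply]
            exact hx.2.2 (n+1) (Nat.succ_le_succ hn)⟩⟩)
        (fun t ht => ht.2.1.1.le)
      rw [ih] at hstep
      simpa using hstep

lemma Irrational.fract' {x : ℝ} (h : Irrational x) : Irrational (Int.fract x) := by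
  have := h.sub_intCast ⌊x⌋; rwa [Int.fract]

lemma of_s_get (n : ℕ) : ∀ (v : ℝ), Irrational v →
    (GenContFract.of v).s.get? n = some ⟨1, (⌊(gaussT^[n] (Int.fract v))⁻¹⌋ : ℝ)⟩ := by
  induction n with
  | zero =>
      intro v hv
      have h : Int.fract v ≠ 0 := hv.fract'.ne_zero'
      simp only [Function.iterate_zero_apply]
      exact GenContFract.of_s_head h
  | succ n ih =>
      intro v hv
      rw [GenContFract.of_s_succ, ih _ (irrational_inv_iff.mpr hv.fract'),
        Function.iterate_succ_apply]
      rfl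

lemma of_not_term {v : ℝ} (hv : Irrational v) (n : ℕ) :
    ¬(GenContFract.of v).TerminatedAt n := by
  rw [GenContFract.terminatedAt_iff_s_none, of_s_get n v hv]
  simp

lemma of_den_pos {v : ℝ} (hv : Irrational v) (n : ℕ) :
    0 < (GenContFract.of v).dens n := by
  have h := GenContFract.succ_nth_fib_le_of_nth_den (v := v) (n := n)
    (Or.inr (of_not_term hv _))
  have hf : 0 < (Nat.fib (n+1) : ℝ) := by
    exact_mod_cast Nat.fib_pos.mpr (Nat.succ_pos n)
  linarith

lemma ratio_bound {x : ℝ} (hx : x ∈ Ioo (0:ℝ) 1) (hirr : Irrational x) (m : ℕ)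
    (hd : (⌊(gaussT^[m+1] x)⁻¹⌋ : ℝ) ≤ 2) (hd1 : (1:ℝ) ≤ (⌊(gaussT^[m+1] x)⁻¹⌋ : ℝ)) :
    1 ≤ (GenContFract.of x).dens (m+2) / (GenContFract.of x).dens (m+1) ∧
    (GenContFract.of x).dens (m+2) / (GenContFract.of x).dens (m+1) ≤ 3 := by
  have hfr : Int.fract x = x := Int.fract_eq_self.mpr ⟨hx.1.le, hx.2⟩
  have hs : (GenContFract.of x).s.get? (m+1) = some ⟨1, (⌊(gaussT^[m+1] x)⁻¹⌋ : ℝ)⟩ := by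
    rw [of_s_get (m+1) x hirr, hfr]
  set B : ℝ := (⌊(gaussT^[m+1] x)⁻¹⌋ : ℝ)
  have hrec : (GenContFract.of x).dens (m+2)
      = B * (GenContFract.of x).dens (m+1) + 1 * (GenContFract.of x).dens m :=
    GenContFract.dens_recurrence hs rfl rfl
  have hp1 : 0 < (GenContFract.of x).dens (m+1) := of_den_pos hirr (m+1)
  have hp0 : 0 < (GenContFract.of x).dens m := of_den_pos hirr m
  have hmono : (GenContFract.of x).dens m ≤ (GenContFract.of x).dens (m+1) :=
    GenContFract.of_den_mono
  rw [hrec]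
  constructor
  · rw [le_div_iff₀ hp1]
    nlinarith
  · rw [div_le_iff₀ hp1]
    nlinarith


lemma fib_sum_le : ∀ m : ℕ, ∑ i ∈ Finset.range m, 1 / (Nat.fib (i + 1) : ℝ)
    ≤ 4 - 2 / (Nat.fib (m+1) : ℝ) - 2 / (Nat.fib (m+2) : ℝ) := by
  intro m
  induction m with
  | zero => simp; norm_num
  | succ m ih =>
      have hpos : ∀ k : ℕ, 0 < (Nat.fib (k+1) : ℝ) := fun k => by
        exact_mod_cast Nat.fib_pos.mpr (Nat.succ_pos k)
      rw [Finset.sum_range_succ]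
      have key : 2 / (Nat.fib (m+3) : ℝ) ≤ 1 / (Nat.fib (m+1) : ℝ) := by
        rw [div_le_div_iff₀ (hpos (m+2)) (hpos m)]
        have h3 : (Nat.fib (m+3) : ℝ) = (Nat.fib (m+2) : ℝ) + (Nat.fib (m+1) : ℝ) := by
          rw [show m+3 = (m+1)+2 by ring, Nat.fib_add_two]
          push_cast; ring
        have hm : (Nat.fib (m+1) : ℝ) ≤ (Nat.fib (m+2) : ℝ) := by
          exact_mod_cast Nat.fib_le_fib_succ
        linarith
      simp only [show m+1+1 = m+2 from rfl, show m+1+2 = m+3 from rfl]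
      simp only [div_eq_mul_inv] at *
      linarith
  
lemma fib_summable : Summable (fun n : ℕ => 1 / (Nat.fib (n + 1) : ℝ)) := by
  apply summable_of_sum_range_le (c := 4)
  · intro n; positivity
  · intro n
    have := fib_sum_le n
    have hpos : ∀ k : ℕ, 0 < (Nat.fib (k+1) : ℝ) := fun k => by
      exact_mod_cast Nat.fib_pos.mpr (Nat.succ_pos k)
    have h1 : 0 < 2 / (Nat.fib (n+1) : ℝ) := div_pos two_pos (hpos n)
    have h2 : 0 < 2 / (Nat.fib (n+2) : ℝ) := div_pos two_pos (hpos (n+1))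
    linarith

lemma one_le_recipFib : 1 ≤ recipFibConst := by
  have h0 : (1:ℝ) = 1 / (Nat.fib (0 + 1) : ℝ) := by norm_num
  refine le_trans (le_of_eq h0) ?_
  exact fib_summable.le_tsum 0 (fun i _ => by positivity)

lemma gaussT_iter_mem {x : ℝ} (hx : x ∈ Ioo (0:ℝ) 1) (h : Irrational x) (n : ℕ) :
    gaussT^[n] x ∈ Ioo (0:ℝ) 1 ∧ Irrational (gaussT^[n] x) := by
  induction n with
  | zero => exact ⟨hx, h⟩
  | succ n ih =>
      rw [Function.iterate_succ_apply']
      exact ⟨gaussT_mem ih.2, gaussT_irrational ih.2⟩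

/-- **Lemma 2.** Given `0 < ε < 1`, for Lebesgue-almost every irrational
`x ∈ (0,1)` there is a strictly increasing sequence `n₁ < n₂ < ⋯` with
`2e^{−2F}/(1+ε) < q_{n_k+1}(x)/q_{n_k}(x) < 2e^{2F}/(1−ε)` for all `k`. -/
theorem poncelet_stmt9
    (ε : ℝ) (hε0 : 0 < ε) (hε1 : ε < 1) :
    ∀ᵐ x ∂(volume.restrict (Ioo (0 : ℝ) 1)), Irrational x →
      ∃ n : ℕ → ℕ, StrictMono n ∧ ∀ k : ℕ,
        2 * exp (-(2 * recipFibConst)) / (1 + ε) <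
            (GenContFract.of x).dens (n k + 1) / (GenContFract.of x).dens (n k) ∧
          (GenContFract.of x).dens (n k + 1) / (GenContFract.of x).dens (n k) <
            2 * exp (2 * recipFibConst) / (1 - ε) := by
  have hF : 1 ≤ recipFibConst := one_le_recipFib
  have hexp2 : (3:ℝ) ≤ exp 2 := by
    have := add_one_le_exp (2:ℝ)
    linarith
  have hL : 2 * exp (-(2 * recipFibConst)) / (1 + ε) < 1 := by
    have h1 : exp (-(2*recipFibConst)) ≤ exp (-2) := exp_le_exp.mpr (by linarith)
    have h2 : exp (-2) ≤ 3⁻¹ := by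
      rw [exp_neg]
      exact inv_anti₀ (by norm_num) hexp2
    have h5 : (1:ℝ) < 1 + ε := by linarith
    rw [div_lt_one (by linarith)]
    nlinarith
  have hU : (3:ℝ) < 2 * exp (2 * recipFibConst) / (1 - ε) := by
    have h1 : exp 2 ≤ exp (2*recipFibConst) := exp_le_exp.mpr (by linarith)
    have h3 : (0:ℝ) < 1 - ε := by linarith
    rw [lt_div_iff₀ h3]
    nlinarith
  have hBadnull : volume (⋃ N, BadN N) = 0 := measure_iUnion_null fun N => BadN_null N
  have h2 : ∀ᵐ x ∂(volume.restrict (Ioo (0:ℝ) 1)), x ∉ ⋃ N, BadN N :=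
    Filter.Eventually.filter_mono (ae_mono Measure.restrict_le_self)
      (measure_eq_zero_iff_ae_notMem.mp hBadnull)
  have h1 : ∀ᵐ x ∂(volume.restrict (Ioo (0:ℝ) 1)), x ∈ Ioo (0:ℝ) 1 :=
    ae_restrict_mem measurableSet_Ioo
  filter_upwards [h1, h2] with x hxI hxB hirr
  have hfreq : ∃ᶠ m in atTop, ¬ gaussT^[m] x < 3⁻¹ := by
    rw [Filter.frequently_atTop]
    intro N
    by_contra h
    push_neg at h
    exact hxB (mem_iUnion.mpr ⟨N, hirr, hxI, fun n hn => h n hn⟩)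
  obtain ⟨φ, hφ, hP⟩ := Filter.extraction_of_frequently_atTop hfreq
  refine ⟨fun k => φ (k+1), fun a b hab => hφ (Nat.succ_lt_succ hab), fun k => ?_⟩
  have hp1 : 1 ≤ φ (k+1) := le_trans (Nat.succ_le_succ (Nat.zero_le k)) hφ.le_apply
  obtain ⟨m, hm⟩ : ∃ m, φ (k+1) = m + 1 := ⟨φ (k+1) - 1, by omega⟩
  have hnlt : ¬ gaussT^[m+1] x < 3⁻¹ := hm ▸ hP (k+1)
  have hy := gaussT_iter_mem hxI hirr (m+1)
  set y := gaussT^[m+1] x with hydef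
  have hy0 : 0 < y := hy.1.1
  have hy3 : 3⁻¹ < y := by
    rcases lt_or_eq_of_le (not_lt.mp hnlt) with h | h
    · exact h
    · exact absurd (show y ∈ Set.range ((↑) : ℚ → ℝ) by
        rw [← h]; exact ⟨(3:ℚ)⁻¹, by push_cast; ring⟩) hy.2
  have hyinv_lt : y⁻¹ < 3 := by
    have := inv_strictAnti₀ (by norm_num : (0:ℝ) < 3⁻¹) hy3
    rwa [inv_inv] at this
  have hyinv_gt : 1 < y⁻¹ := by
    have := inv_strictAnti₀ hy0 hy.1.2
    rwa [inv_one] at this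
  have hd : (⌊y⁻¹⌋ : ℝ) ≤ 2 := by
    have h3 : ⌊y⁻¹⌋ < 3 := Int.floor_lt.mpr (by exact_mod_cast hyinv_lt)
    exact_mod_cast (by omega : ⌊y⁻¹⌋ ≤ 2)
  have hd1 : (1:ℝ) ≤ (⌊y⁻¹⌋ : ℝ) := by
    have h4 : 1 ≤ ⌊y⁻¹⌋ := Int.le_floor.mpr (by exact_mod_cast hyinv_gt.le)
    exact_mod_cast h4
  have hr := ratio_bound hxI hirr m (by rw [← hydef]; exact hd) (by rw [← hydef]; exact hd1)
  have hgoal : (fun k => φ (k+1)) k = m + 1 := hm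
  rw [hgoal]
  exact ⟨lt_of_lt_of_le hL hr.1, lt_of_le_of_lt hr.2 hU⟩
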